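/- If P ≠ Q are density matrices on C^d, then qW(P,Q) > 0, where qW(P,Q) := min over couplings π of Tr(π C) with C = (I - SWAP)/2. Equivalently, qW(P,Q) = 0 implies P = Q. -/

import Mathlib

open Matrix ComplexOrder

/-- The SWAP operator on `ℂ^d ⊗ ℂ^d`: `SWAP (x ⊗ y) = y ⊗ x`. -/
def swapMat (d : ℕ) : Matrix (Fin d × Fin d) (Fin d × Fin d) ℂ :=
  fun p q => if p.1 = q.2 ∧ p.2 = q.1 then 1 else 0

/-- `C = (I - SWAP)/2`. -/
noncomputable def Cmat (d : ℕ) : Matrix (Fin d × Fin d) (Fin d × Fin d) ℂ :=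
  (1/2 : ℂ) • (1 - swapMat d)

/-- Partial trace over the second tensor factor. -/
noncomputable def ptrace2 {d : ℕ} (π : Matrix (Fin d × Fin d) (Fin d × Fin d) ℂ) :
    Matrix (Fin d) (Fin d) ℂ := fun i k => ∑ j, π (i, j) (k, j)

/-- Partial trace over the first tensor factor. -/
noncomputable def ptrace1 {d : ℕ} (π : Matrix (Fin d × Fin d) (Fin d × Fin d) ℂ) :
    Matrix (Fin d) (Fin d) ℂ := fun j l => ∑ i, π (i, j) (i, l)

/-- A density matrix: positive semidefinite (hence Hermitian) with trace 1. -/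
def IsDensity {n : Type*} [Fintype n] (ρ : Matrix n n ℂ) : Prop :=
  ρ.PosSemidef ∧ ρ.trace = 1


/-- A coupling of `(P, Q)`: a density matrix on the product space with marginals `P` and `Q`. -/
def IsCoupling {d : ℕ} (π : Matrix (Fin d × Fin d) (Fin d × Fin d) ℂ)
    (P Q : Matrix (Fin d) (Fin d) ℂ) : Prop :=
  IsDensity π ∧ ptrace2 π = P ∧ ptrace1 π = Q

/-- The quantum Wasserstein semimetric: the optimal value of `Tr(π C)` over couplings. -/
noncomputable def qW {d : ℕ} (P Q : Matrix (Fin d) (Fin d) ℂ) : ℝ :=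
  sInf {x : ℝ | ∃ π, IsCoupling π P Q ∧ (π * Cmat d).trace = (x : ℂ)}

namespace QWAux

open Finset

variable {ι : Type*} [Fintype ι]

/-- complex inner product of two vectors -/
noncomputable def inn (u v : ι → ℂ) : ℂ := ∑ r, (starRingEnd ℂ) (u r) * v r

/-- squared norm of a vector -/
noncomputable def nsq (u : ι → ℂ) : ℝ := ∑ r, ‖u r‖ ^ 2

lemma nsq_nonneg (u : ι → ℂ) : 0 ≤ nsq u :=
  Finset.sum_nonneg fun _ _ => sq_nonneg _

lemma inn_self (u : ι → ℂ) : inn u u = (nsq u : ℝ) := by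
  have key : ∀ z : ℂ, (starRingEnd ℂ) z * z = ((‖z‖ ^ 2 : ℝ) : ℂ) := fun z => by
    rw [mul_comm, Complex.mul_conj']; push_cast; ring
  unfold inn nsq
  simp_rw [key]
  norm_cast

lemma inn_sub_left (u v w : ι → ℂ) : inn (u - v) w = inn u w - inn v w := by
  unfold inn
  rw [← Finset.sum_sub_distrib]
  refine Finset.sum_congr rfl fun r _ => ?_
  simp [sub_mul]

lemma inn_sub_right (u v w : ι → ℂ) : inn u (v - w) = inn u v - inn u w := by
  unfold inn
  rw [← Finset.sum_sub_distrib]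
  refine Finset.sum_congr rfl fun r _ => ?_
  simp [mul_sub]

/-- Cauchy-Schwarz -/
lemma norm_inn_le (u v : ι → ℂ) : ‖inn u v‖ ≤ Real.sqrt (nsq u) * Real.sqrt (nsq v) := by
  have h1 : ‖inn u v‖ ≤ ∑ r, ‖u r‖ * ‖v r‖ := by
    refine (norm_sum_le _ _).trans (Finset.sum_le_sum fun r _ => ?_)
    rw [norm_mul, RCLike.norm_conj]
  have h2 := Finset.sum_mul_sq_le_sq_mul_sq univ (fun r => ‖u r‖) (fun r => ‖v r‖)
  refine h1.trans ?_
  calc ∑ r, ‖u r‖ * ‖v r‖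
      = Real.sqrt ((∑ r, ‖u r‖ * ‖v r‖) ^ 2) :=
        (Real.sqrt_sq (Finset.sum_nonneg fun r _ =>
          mul_nonneg (norm_nonneg _) (norm_nonneg _))).symm
    _ ≤ Real.sqrt (nsq u * nsq v) := Real.sqrt_le_sqrt h2
    _ = _ := Real.sqrt_mul (nsq_nonneg u) _

lemma sum_sqrt_mul_sqrt_le (f g : ι → ℝ) (hf : ∀ i, 0 ≤ f i) (hg : ∀ i, 0 ≤ g i) :
    ∑ i, Real.sqrt (f i) * Real.sqrt (g i) ≤ Real.sqrt (∑ i, f i) * Real.sqrt (∑ i, g i) := by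
  have h := Finset.sum_mul_sq_le_sq_mul_sq univ (fun i => Real.sqrt (f i)) (fun i => Real.sqrt (g i))
  simp only [Real.sq_sqrt (hf _), Real.sq_sqrt (hg _)] at h
  calc ∑ i, Real.sqrt (f i) * Real.sqrt (g i)
      = Real.sqrt ((∑ i, Real.sqrt (f i) * Real.sqrt (g i)) ^ 2) :=
        (Real.sqrt_sq (Finset.sum_nonneg fun i _ =>
          mul_nonneg (Real.sqrt_nonneg _) (Real.sqrt_nonneg _))).symm
    _ ≤ Real.sqrt ((∑ i, f i) * ∑ i, g i) := Real.sqrt_le_sqrt h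
    _ = _ := Real.sqrt_mul (Finset.sum_nonneg fun i _ => hf i) _

end QWAux
namespace QWAux

lemma gram {n : Type*} [Fintype n] (B : Matrix n n ℂ) (p q : n) :
    (Bᴴ * B) p q = inn (fun r => B r p) (fun r => B r q) := by
  simp [Matrix.mul_apply, inn, Matrix.conjTranspose_apply]

lemma key (d : ℕ) (P Q : Matrix (Fin d) (Fin d) ℂ) (i k : Fin d) (x : ℝ)
    (π : Matrix (Fin d × Fin d) (Fin d × Fin d) ℂ)
    (hcpl : IsCoupling π P Q) (hxv : (π * Cmat d).trace = (x : ℂ)) :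
    ‖P i k - Q i k‖ ^ 2 ≤ 16 * x := by
  obtain ⟨⟨hpsd, htr⟩, hm2, hm1⟩ := hcpl
  obtain ⟨B, hB⟩ : ∃ B : Matrix (Fin d × Fin d) (Fin d × Fin d) ℂ, π = Bᴴ * B := by
    open scoped MatrixOrder Matrix.Norms.L2Operator in
    exact CStarAlgebra.nonneg_iff_eq_star_mul_self.mp hpsd.nonneg
  set c : Fin d × Fin d → (Fin d × Fin d) → ℂ := fun p r => B r p with hcdef
  have hπ : ∀ p q, π p q = inn (c p) (c q) := fun p q => by rw [hB]; exact gram B p q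
  -- trace of π in terms of nsq
  have htrτ : ∑ p : Fin d × Fin d, nsq (c p) = 1 := by
    have h1 : ((∑ p : Fin d × Fin d, nsq (c p) : ℝ) : ℂ) = 1 := by
      rw [← htr]
      simp only [Matrix.trace, Matrix.diag]
      push_cast
      exact (Finset.sum_congr rfl fun p _ => by rw [hπ p p, inn_self]).symm
    exact_mod_cast h1
  -- trace of π * C
  have hCsum : ∀ p : Fin d × Fin d,
      ∑ q, π p q * Cmat d q p = (1/2) * (π p p - π p (p.2, p.1)) := by
    intro p
    have hterm : ∀ q : Fin d × Fin d, π p q * Cmat d q p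
        = (1/2) * ((if q = p then π p q else 0) - (if q = (p.2, p.1) then π p q else 0)) := by
      intro q
      simp only [Cmat, swapMat, Matrix.smul_apply, Matrix.sub_apply, Matrix.one_apply,
        smul_eq_mul]
      have h2 : (q.1 = p.2 ∧ q.2 = p.1) ↔ q = (p.2, p.1) := by
        constructor
        · rintro ⟨h1, h2⟩; exact Prod.ext h1 h2
        · rintro rfl; exact ⟨rfl, rfl⟩
      rw [if_congr h2 rfl rfl]
      split_ifs <;> ring
    rw [Finset.sum_congr rfl fun q _ => hterm q, ← Finset.mul_sum,
      Finset.sum_sub_distrib]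
    simp
  have htrace : (π * Cmat d).trace
      = (1/2) * ∑ p : Fin d × Fin d, (π p p - π p (p.2, p.1)) := by
    simp only [Matrix.trace, Matrix.diag, Matrix.mul_apply]
    rw [Finset.sum_congr rfl fun p _ => hCsum p, ← Finset.mul_sum]
  -- key identity: sum of antisymmetric weights equals 4x
  have h4x : ∑ p : Fin d × Fin d, inn (c p - c (p.2, p.1)) (c p - c (p.2, p.1)) = 4 * (x : ℂ) := by
    have expand : ∀ p : Fin d × Fin d, inn (c p - c (p.2, p.1)) (c p - c (p.2, p.1))
        = inn (c p) (c p) - inn (c p) (c (p.2, p.1))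
          - (inn (c (p.2, p.1)) (c p) - inn (c (p.2, p.1)) (c (p.2, p.1))) := by
      intro p
      rw [inn_sub_left, inn_sub_right, inn_sub_right]
    simp_rw [expand]
    rw [Finset.sum_sub_distrib, Finset.sum_sub_distrib, Finset.sum_sub_distrib]
    have swap1 : ∑ p : Fin d × Fin d, inn (c (p.2, p.1)) (c p)
        = ∑ p : Fin d × Fin d, inn (c p) (c (p.2, p.1)) := by
      exact Fintype.sum_equiv (Equiv.prodComm (Fin d) (Fin d)) _ _ fun p => rfl
    have swap2 : ∑ p : Fin d × Fin d, inn (c (p.2, p.1)) (c (p.2, p.1))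
        = ∑ p : Fin d × Fin d, inn (c p) (c p) := by
      exact Fintype.sum_equiv (Equiv.prodComm (Fin d) (Fin d)) _ _ fun p => rfl
    rw [swap1, swap2]
    have hxeq : (x : ℂ) = (1/2) * ∑ p : Fin d × Fin d, (π p p - π p (p.2, p.1)) := by
      rw [← hxv, htrace]
    have hsplit : ∑ p : Fin d × Fin d, (π p p - π p (p.2, p.1))
        = ∑ p : Fin d × Fin d, inn (c p) (c p)
          - ∑ p : Fin d × Fin d, inn (c p) (c (p.2, p.1)) := by
      rw [← Finset.sum_sub_distrib]
      exact Finset.sum_congr rfl fun p _ => by rw [hπ p p, hπ p (p.2, p.1)]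
    rw [hxeq, hsplit]
    ring
  have hsum_s : ∑ p : Fin d × Fin d, nsq (c p - c (p.2, p.1)) = 4 * x := by
    have h1 : ((∑ p : Fin d × Fin d, nsq (c p - c (p.2, p.1)) : ℝ) : ℂ) = 4 * (x : ℂ) := by
      push_cast
      rw [← h4x]
      exact Finset.sum_congr rfl fun p _ => (inn_self _).symm
    exact_mod_cast h1
  have hx0 : 0 ≤ x := by
    have := Finset.sum_nonneg (fun p (_ : p ∈ Finset.univ) =>
      nsq_nonneg (c p - c (p.2, p.1)))
    rw [hsum_s] at this; linarith
  -- row/column bounds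
  have hrow_s : ∀ a : Fin d, ∑ b, nsq (c (a, b) - c (b, a)) ≤ 4 * x := by
    intro a
    rw [← hsum_s, Fintype.sum_prod_type]
    exact Finset.single_le_sum (f := fun a' => ∑ b, nsq (c (a', b) - c (b, a')))
      (fun a' _ => Finset.sum_nonneg fun b _ => nsq_nonneg _) (Finset.mem_univ a)
  have hrow_τ : ∀ a : Fin d, ∑ b, nsq (c (a, b)) ≤ 1 := by
    intro a
    rw [← htrτ, Fintype.sum_prod_type]
    exact Finset.single_le_sum (f := fun a' => ∑ b, nsq (c (a', b)))
      (fun a' _ => Finset.sum_nonneg fun b _ => nsq_nonneg _) (Finset.mem_univ a)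
  have hcol_τ : ∀ a : Fin d, ∑ j, nsq (c (j, a)) ≤ 1 := by
    intro a
    rw [← htrτ, Fintype.sum_prod_type, Finset.sum_comm]
    exact Finset.single_le_sum (f := fun b => ∑ j, nsq (c (j, b)))
      (fun b _ => Finset.sum_nonneg fun j _ => nsq_nonneg _) (Finset.mem_univ a)
  -- marginal difference identity
  have hdiff : P i k - Q i k
      = ∑ j, (inn (c (i, j) - c (j, i)) (c (k, j)) + inn (c (j, i)) (c (k, j) - c (j, k))) := by
    rw [← hm2, ← hm1]
    show (∑ j, π (i, j) (k, j)) - (∑ j, π (j, i) (j, k)) = _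
    rw [← Finset.sum_sub_distrib]
    refine Finset.sum_congr rfl fun j _ => ?_
    rw [hπ, hπ, inn_sub_left, inn_sub_right]
    ring
  -- norm bound
  have hs4 : Real.sqrt (4 * x) = 2 * Real.sqrt x := by
    rw [show (4 : ℝ) * x = 2 ^ 2 * x by ring, Real.sqrt_mul (by positivity),
      Real.sqrt_sq (by norm_num)]
  have hnorm : ‖P i k - Q i k‖ ≤ 4 * Real.sqrt x := by
    rw [hdiff]
    refine (norm_sum_le _ _).trans ?_
    have step : ∀ j, ‖inn (c (i, j) - c (j, i)) (c (k, j)) + inn (c (j, i)) (c (k, j) - c (j, k))‖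
        ≤ Real.sqrt (nsq (c (i, j) - c (j, i))) * Real.sqrt (nsq (c (k, j)))
          + Real.sqrt (nsq (c (j, i))) * Real.sqrt (nsq (c (k, j) - c (j, k))) := fun j =>
      (norm_add_le _ _).trans (add_le_add (norm_inn_le _ _) (norm_inn_le _ _))
    refine (Finset.sum_le_sum fun j _ => step j).trans ?_
    rw [Finset.sum_add_distrib]
    have b1 : ∑ j, Real.sqrt (nsq (c (i, j) - c (j, i))) * Real.sqrt (nsq (c (k, j)))
        ≤ Real.sqrt (4 * x) * 1 := by
      refine (sum_sqrt_mul_sqrt_le _ _ (fun j => nsq_nonneg _) (fun j => nsq_nonneg _)).trans ?_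
      have e1 : Real.sqrt (∑ j, nsq (c (i, j) - c (j, i))) ≤ Real.sqrt (4 * x) :=
        Real.sqrt_le_sqrt (hrow_s i)
      have e2 : Real.sqrt (∑ j, nsq (c (k, j))) ≤ 1 := by
        rw [show (1 : ℝ) = Real.sqrt 1 by simp]
        exact Real.sqrt_le_sqrt (hrow_τ k)
      exact mul_le_mul e1 e2 (Real.sqrt_nonneg _) (Real.sqrt_nonneg _)
    have b2 : ∑ j, Real.sqrt (nsq (c (j, i))) * Real.sqrt (nsq (c (k, j) - c (j, k)))
        ≤ 1 * Real.sqrt (4 * x) := by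
      refine (sum_sqrt_mul_sqrt_le _ _ (fun j => nsq_nonneg _) (fun j => nsq_nonneg _)).trans ?_
      have e1 : Real.sqrt (∑ j, nsq (c (j, i))) ≤ 1 := by
        rw [show (1 : ℝ) = Real.sqrt 1 by simp]
        exact Real.sqrt_le_sqrt (hcol_τ i)
      have e2 : Real.sqrt (∑ j, nsq (c (k, j) - c (j, k))) ≤ Real.sqrt (4 * x) :=
        Real.sqrt_le_sqrt (hrow_s k)
      exact mul_le_mul e1 e2 (Real.sqrt_nonneg _) (le_trans (Real.sqrt_nonneg _) e1)
    calc _ ≤ Real.sqrt (4 * x) * 1 + 1 * Real.sqrt (4 * x) := add_le_add b1 b2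
      _ = 4 * Real.sqrt x := by rw [hs4]; ring
  calc ‖P i k - Q i k‖ ^ 2 ≤ (4 * Real.sqrt x) ^ 2 := by
        exact pow_le_pow_left₀ (norm_nonneg _) hnorm 2
    _ = 16 * x := by rw [mul_pow, Real.sq_sqrt hx0]; ring

lemma exists_coupling (d : ℕ) (P Q : Matrix (Fin d) (Fin d) ℂ)
    (hP : IsDensity P) (hQ : IsDensity Q) :
    ∃ x : ℝ, ∃ π, IsCoupling π P Q ∧ (π * Cmat d).trace = (x : ℂ) := by
  obtain ⟨hPp, hPt⟩ := hP
  obtain ⟨hQp, hQt⟩ := hQ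
  have hPt' : ∑ a, P a a = 1 := hPt
  have hQt' : ∑ a, Q a a = 1 := hQt
  set π₀ : Matrix (Fin d × Fin d) (Fin d × Fin d) ℂ := fun p q => P p.1 q.1 * Q p.2 q.2
    with hπ₀
  obtain ⟨A, hA⟩ : ∃ A : Matrix (Fin d) (Fin d) ℂ, P = Aᴴ * A := by
    open scoped MatrixOrder Matrix.Norms.L2Operator in
    exact CStarAlgebra.nonneg_iff_eq_star_mul_self.mp hPp.nonneg
  obtain ⟨B, hB⟩ : ∃ B : Matrix (Fin d) (Fin d) ℂ, Q = Bᴴ * B := by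
    open scoped MatrixOrder Matrix.Norms.L2Operator in
    exact CStarAlgebra.nonneg_iff_eq_star_mul_self.mp hQp.nonneg
  set M : Matrix (Fin d × Fin d) (Fin d × Fin d) ℂ := fun r p => A r.1 p.1 * B r.2 p.2 with hM
  have hfact : π₀ = Mᴴ * M := by
    ext p q
    simp only [hπ₀, Matrix.mul_apply, Matrix.conjTranspose_apply, hM]
    rw [hA, hB]
    simp only [Matrix.mul_apply, Matrix.conjTranspose_apply]
    rw [Finset.sum_mul_sum]
    change _ = ∑ r : Fin d × Fin d, star (A r.1 p.1 * B r.2 p.2) * (A r.1 q.1 * B r.2 q.2)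
    rw [Fintype.sum_prod_type]
    refine Finset.sum_congr rfl fun r1 _ => Finset.sum_congr rfl fun r2 _ => ?_
    simp only [star_mul']
    ring
  have hpsd0 : π₀.PosSemidef := hfact ▸ Matrix.posSemidef_conjTranspose_mul_self M
  have htr0 : π₀.trace = 1 := by
    simp only [Matrix.trace, Matrix.diag, hπ₀]
    rw [Fintype.sum_prod_type]
    dsimp only
    rw [← Finset.sum_mul_sum, hPt', hQt', one_mul]
  have hm2 : ptrace2 π₀ = P := by
    ext i k
    show (∑ j, P i k * Q j j) = P i k
    rw [← Finset.mul_sum, hQt', mul_one]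
  have hm1 : ptrace1 π₀ = Q := by
    ext j l
    show (∑ i, P i i * Q j l) = Q j l
    rw [← Finset.sum_mul, hPt', one_mul]
  have hswap : (swapMat d)ᴴ = swapMat d := by
    ext p q
    simp only [Matrix.conjTranspose_apply, swapMat]
    by_cases hpq : p.1 = q.2 ∧ p.2 = q.1
    · rw [if_pos hpq, if_pos ⟨hpq.2.symm, hpq.1.symm⟩, star_one]
    · rw [if_neg hpq, if_neg (fun hcon => hpq ⟨hcon.2.symm, hcon.1.symm⟩), star_zero]
  have hC : (Cmat d)ᴴ = Cmat d := by
    simp only [Cmat, Matrix.conjTranspose_smul, Matrix.conjTranspose_sub,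
      Matrix.conjTranspose_one, hswap]
    congr 1
    simp
  have hreal : (starRingEnd ℂ) ((π₀ * Cmat d).trace) = (π₀ * Cmat d).trace := by
    calc (starRingEnd ℂ) ((π₀ * Cmat d).trace)
        = ((π₀ * Cmat d)ᴴ).trace := (Matrix.trace_conjTranspose _).symm
      _ = ((Cmat d)ᴴ * π₀ᴴ).trace := by rw [Matrix.conjTranspose_mul]
      _ = (Cmat d * π₀).trace := by rw [hC, hpsd0.1]
      _ = (π₀ * Cmat d).trace := Matrix.trace_mul_comm _ _
  exact ⟨((π₀ * Cmat d).trace).re, π₀, ⟨⟨hpsd0, htr0⟩, hm2, hm1⟩,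
    (Complex.conj_eq_iff_re.mp hreal).symm⟩

end QWAux

/-- If `P ≠ Q` then `qW(P, Q) > 0`; equivalently `qW(P, Q) = 0` implies `P = Q`. -/
theorem qW_eq_zero_iff (d : ℕ) (P Q : Matrix (Fin d) (Fin d) ℂ)
    (hP : IsDensity P) (hQ : IsDensity Q) (h : qW P Q = 0) : P = Q := by
  by_contra hne
  have hex : ∃ i k, P i k ≠ Q i k := by
    by_contra h'
    push_neg at h'
    exact hne (Matrix.ext fun i k => h' i k)
  obtain ⟨i, k, hik⟩ := hex
  set S : Set ℝ := {x : ℝ | ∃ π, IsCoupling π P Q ∧ (π * Cmat d).trace = (x : ℂ)} with hS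
  have hSne : S.Nonempty := by
    obtain ⟨x, π, hcpl, hv⟩ := QWAux.exists_coupling d P Q hP hQ
    exact ⟨x, π, hcpl, hv⟩
  have hlb : ∀ y ∈ S, ‖P i k - Q i k‖ ^ 2 / 16 ≤ y := by
    rintro y ⟨π, hcpl, hv⟩
    have := QWAux.key d P Q i k y π hcpl hv
    linarith
  have hinf : ‖P i k - Q i k‖ ^ 2 / 16 ≤ sInf S := le_csInf hSne hlb
  have h0 : sInf S = 0 := h
  have hnz : ‖P i k - Q i k‖ ≠ 0 := norm_ne_zero_iff.mpr (sub_ne_zero.mpr hik)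
  have hpos : 0 < ‖P i k - Q i k‖ ^ 2 / 16 := by positivity
  rw [h0] at hinf
  linarith
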